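/- On the unit sphere S² with its geodesic distance d, let a be a fixed point, ρ > 0, t, u ≥ 0 with u < ρ + t and ρ + t + u < π. Let x and z be points on a common geodesic through a with d(a,x) = ρ+t and d(a,z) = u, on the same side. Then the minimum over p in the closed geodesic ball B̄(a,ρ) of d(x,p) − d(z,p) equals t − ρ + u if cot u ≥ 2 cot ρ − cot(ρ+t), and equals arccos(cos(ρ+t−u) + sin²ρ · sin²(ρ+t−u)/(2 sin u sin(ρ+t))) otherwise. -/

import Mathlib

open Metric

/-- The geodesic (great-circle) distance on the unit sphere of `ℝ³`. -/
noncomputable def sphereDist (p q : EuclideanSpace ℝ (Fin 3)) : ℝ :=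
  Real.arccos (inner ℝ p q : ℝ)

namespace MinHAux
open Real

lemma arccos_anti {x y : ℝ} (h : x ≤ y) : Real.arccos y ≤ Real.arccos x := by
  simp only [Real.arccos]
  have := Real.monotone_arcsin h
  linarith

lemma quad_step (a b C c₀ s₀ c s c₁ s₁ : ℝ)
    (p0 : c₀^2+s₀^2 = 1) (p : c^2+s^2 = 1) (p1 : c₁^2+s₁^2 = 1)
    (hc₀ : 0 < c₀) (hc : 0 < c) (hc₁ : 0 ≤ c₁) (hs₀ : 0 ≤ s₀) (hs : 0 ≤ s) (hs₁ : 0 ≤ s₁)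
    (cr1 : 0 ≤ s*c₀ - c*s₀) (cr2 : 0 ≤ s₁*c - c₁*s)
    (hP0 : a*(c₀^2-s₀^2) + 2*b*s₀*c₀ + C = 0)
    (hW : 0 ≤ b*(c₀^2-s₀^2) - 2*a*s₀*c₀)
    (hP1 : 0 ≤ a*(c₁^2-s₁^2) + 2*b*s₁*c₁ + C) :
    0 ≤ a*(c^2-s^2) + 2*b*s*c + C := by
  have key : (C-a)*s₀ + b*c₀ = c₀*(b*(c₀^2-s₀^2) - 2*a*s₀*c₀) := by
    linear_combination s₀*hP0 + (a*s₀ - b*c₀)*p0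
  have hl0 : 0 ≤ (C-a)*c₀*s₀ + ((C-a)*s₀+2*b*c₀)*c₀ := by
    have e : (C-a)*c₀*s₀ + ((C-a)*s₀+2*b*c₀)*c₀ = 2*c₀*(c₀*(b*(c₀^2-s₀^2) - 2*a*s₀*c₀)) := by
      linear_combination 2*c₀*key
    rw [e]
    positivity
  have hΔ : 0 ≤ s₁*c₀ - c₁*s₀ := by
    have e : c*(s₁*c₀ - c₁*s₀) = c₀*(s₁*c - c₁*s) + c₁*(s*c₀ - c*s₀) := by ring
    nlinarith [mul_nonneg hc₀.le cr2, mul_nonneg hc₁ cr1]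
  by_cases hdeg : s₁*c₀ - c₁*s₀ = 0
  · have hc₁pos : 0 < c₁ := by
      rcases hc₁.eq_or_lt with h0 | h0
      · exfalso
        have h3 : s₁ * c₀ = 0 := by rw [← h0] at hdeg; linarith
        have h4 : s₁ = 0 := by
          rcases mul_eq_zero.mp h3 with h | h
          · exact h
          · exact absurd h (ne_of_gt hc₀)
        rw [← h0, h4] at p1; norm_num at p1
      · exact h0
    have h2 : s*c₀ - c*s₀ = 0 := by
      have e : c*(s₁*c₀ - c₁*s₀) = c₀*(s₁*c - c₁*s) + c₁*(s*c₀ - c*s₀) := by ring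
      nlinarith [mul_nonneg hc₀.le cr2, mul_nonneg hc₁ cr1]
    have hsq : (c - c₀)*(c + c₀) = 0 := by
      linear_combination (-(s*c₀+c*s₀))*h2 - c^2*p0 + c₀^2*p
    have hceq : c = c₀ := by
      rcases mul_eq_zero.mp hsq with h | h
      · linarith
      · linarith
    have hseq : s = s₀ := by
      have : s * c₀ = s₀ * c₀ := by rw [hceq] at h2; linarith
      exact mul_right_cancel₀ (ne_of_gt hc₀) this
    rw [hceq, hseq]; linarith
  · have hΔpos : 0 < s₁*c₀ - c₁*s₀ := lt_of_le_of_ne hΔ (Ne.symm hdeg)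
    have I1c1 : (s₁*c₀ - c₁*s₀) * ((C-a)*c₀*s₁ + ((C-a)*s₀+2*b*c₀)*c₁)
        = (a*(c₁^2-s₁^2) + 2*b*s₁*c₁ + C)*c₀^2
          - c₁^2*(a*(c₀^2-s₀^2)+2*b*s₀*c₀+C) := by
      linear_combination C*c₀^2*p1 - C*c₁^2*p0
    rw [hP0] at I1c1
    have hl1 : 0 ≤ (C-a)*c₀*s₁ + ((C-a)*s₀+2*b*c₀)*c₁ := by
      have h1 : 0 ≤ (s₁*c₀ - c₁*s₀) * ((C-a)*c₀*s₁ + ((C-a)*s₀+2*b*c₀)*c₁) := by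
        rw [I1c1]; simp only [mul_zero, sub_zero]; exact mul_nonneg hP1 (sq_nonneg c₀)
      exact nonneg_of_mul_nonneg_right h1 hΔpos
    have hl : 0 ≤ (C-a)*c₀*s + ((C-a)*s₀+2*b*c₀)*c := by
      have I2 : (s₁*c₀ - c₁*s₀)*((C-a)*c₀*s + ((C-a)*s₀+2*b*c₀)*c)
          = (s₁*c - c₁*s)*((C-a)*c₀*s₀ + ((C-a)*s₀+2*b*c₀)*c₀)
            + (s*c₀ - c*s₀)*((C-a)*c₀*s₁ + ((C-a)*s₀+2*b*c₀)*c₁) := by ring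
      have h1 : 0 ≤ (s₁*c₀ - c₁*s₀)*((C-a)*c₀*s + ((C-a)*s₀+2*b*c₀)*c) := by
        rw [I2]; exact add_nonneg (mul_nonneg cr2 hl0) (mul_nonneg cr1 hl1)
      exact nonneg_of_mul_nonneg_right h1 hΔpos
    have Ifin : (a*(c^2-s^2) + 2*b*s*c + C)*c₀^2
        = (s*c₀ - c*s₀)*((C-a)*c₀*s + ((C-a)*s₀+2*b*c₀)*c)
          + c^2*(a*(c₀^2-s₀^2)+2*b*s₀*c₀+C) := by
      linear_combination C*c^2*p0 - C*c₀^2*p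
    rw [hP0] at Ifin
    have h1 : 0 ≤ (a*(c^2-s^2) + 2*b*s*c + C)*c₀^2 := by
      rw [Ifin]; simp only [mul_zero, add_zero]; exact mul_nonneg cr1 hl
    exact nonneg_of_mul_nonneg_left h1 (by positivity)


lemma sinusoid_nonneg (a b C β₀ β β₁ : ℝ) (h00 : 0 ≤ β₀) (h01 : β₀ ≤ β) (h02 : β ≤ β₁)
    (h03 : β₁ ≤ π) (hβ : β < π)
    (hg0 : a * Real.cos β₀ + b * Real.sin β₀ + C = 0)
    (hg0' : 0 ≤ b * Real.cos β₀ - a * Real.sin β₀)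
    (hg1 : 0 ≤ a * Real.cos β₁ + b * Real.sin β₁ + C) :
    0 ≤ a * Real.cos β + b * Real.sin β + C := by
  have hpi := Real.pi_pos
  have p0 := Real.sin_sq_add_cos_sq (β₀/2)
  have p := Real.sin_sq_add_cos_sq (β/2)
  have p1 := Real.sin_sq_add_cos_sq (β₁/2)
  have hc₀ : 0 < Real.cos (β₀/2) := Real.cos_pos_of_mem_Ioo ⟨by linarith, by linarith⟩
  have hc : 0 < Real.cos (β/2) := Real.cos_pos_of_mem_Ioo ⟨by linarith, by linarith⟩
  have hc₁ : 0 ≤ Real.cos (β₁/2) := Real.cos_nonneg_of_mem_Icc ⟨by linarith, by linarith⟩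
  have hs₀ : 0 ≤ Real.sin (β₀/2) := Real.sin_nonneg_of_nonneg_of_le_pi (by linarith) (by linarith)
  have hs : 0 ≤ Real.sin (β/2) := Real.sin_nonneg_of_nonneg_of_le_pi (by linarith) (by linarith)
  have hs₁ : 0 ≤ Real.sin (β₁/2) := Real.sin_nonneg_of_nonneg_of_le_pi (by linarith) (by linarith)
  have cr1 : 0 ≤ Real.sin (β/2) * Real.cos (β₀/2) - Real.cos (β/2) * Real.sin (β₀/2) := by
    have h := Real.sin_nonneg_of_nonneg_of_le_pi (x := β/2 - β₀/2) (by linarith) (by linarith)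
    rwa [Real.sin_sub] at h
  have cr2 : 0 ≤ Real.sin (β₁/2) * Real.cos (β/2) - Real.cos (β₁/2) * Real.sin (β/2) := by
    have h := Real.sin_nonneg_of_nonneg_of_le_pi (x := β₁/2 - β/2) (by linarith) (by linarith)
    rwa [Real.sin_sub] at h
  have e0c := Real.cos_two_mul (β₀/2)
  rw [show 2*(β₀/2) = β₀ from by ring] at e0c
  have e0s := Real.sin_two_mul (β₀/2)
  rw [show 2*(β₀/2) = β₀ from by ring] at e0s
  have ec := Real.cos_two_mul (β/2)
  rw [show 2*(β/2) = β from by ring] at ec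
  have es := Real.sin_two_mul (β/2)
  rw [show 2*(β/2) = β from by ring] at es
  have e1c := Real.cos_two_mul (β₁/2)
  rw [show 2*(β₁/2) = β₁ from by ring] at e1c
  have e1s := Real.sin_two_mul (β₁/2)
  rw [show 2*(β₁/2) = β₁ from by ring] at e1s
  have hP0 : a*(Real.cos (β₀/2)^2 - Real.sin (β₀/2)^2) + 2*b*Real.sin (β₀/2)*Real.cos (β₀/2) + C = 0 := by
    rw [e0c, e0s] at hg0; linear_combination hg0 - a*p0
  have hW : 0 ≤ b*(Real.cos (β₀/2)^2 - Real.sin (β₀/2)^2) - 2*a*Real.sin (β₀/2)*Real.cos (β₀/2) := by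
    rw [e0c, e0s] at hg0'
    have e : b*(Real.cos (β₀/2)^2 - Real.sin (β₀/2)^2) - 2*a*Real.sin (β₀/2)*Real.cos (β₀/2)
        = b*(2*Real.cos (β₀/2)^2 - 1) - a*(2*Real.sin (β₀/2)*Real.cos (β₀/2)) := by
      linear_combination (-b)*p0
    linarith [hg0', e.ge, e.le]
  have hP1 : 0 ≤ a*(Real.cos (β₁/2)^2 - Real.sin (β₁/2)^2) + 2*b*Real.sin (β₁/2)*Real.cos (β₁/2) + C := by
    rw [e1c, e1s] at hg1
    have e : a*(Real.cos (β₁/2)^2 - Real.sin (β₁/2)^2) + 2*b*Real.sin (β₁/2)*Real.cos (β₁/2) + C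
        = a*(2*Real.cos (β₁/2)^2 - 1) + b*(2*Real.sin (β₁/2)*Real.cos (β₁/2)) + C := by
      linear_combination (-a)*p1
    linarith [hg1, e.ge, e.le]
  have main := quad_step a b C (Real.cos (β₀/2)) (Real.sin (β₀/2)) (Real.cos (β/2)) (Real.sin (β/2))
    (Real.cos (β₁/2)) (Real.sin (β₁/2)) (by linarith) (by linarith) (by linarith)
    hc₀ hc hc₁ hs₀ hs hs₁ cr1 cr2 hP0 hW hP1
  rw [ec, es]
  have e : a*(2*Real.cos (β/2)^2 - 1) + b*(2*Real.sin (β/2)*Real.cos (β/2)) + C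
      = a*(Real.cos (β/2)^2 - Real.sin (β/2)^2) + 2*b*Real.sin (β/2)*Real.cos (β/2) + C := by
    linear_combination a*p
  linarith [main, e.ge, e.le]


lemma abs_facts {x : ℝ} (h : x^2 ≤ 1) : -1 ≤ x ∧ x ≤ 1 := by
  constructor
  · nlinarith [sq_nonneg (x+1)]
  · nlinarith [sq_nonneg (x-1)]

lemma neg_sqrt_le {x c : ℝ} (h : x^2 ≤ c) : -Real.sqrt c ≤ x := by
  nlinarith [Real.sq_sqrt (le_trans (sq_nonneg x) h), Real.sqrt_nonneg c,
    sq_nonneg (x + Real.sqrt c)]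

lemma le_of_sq_le {v s : ℝ} (hs : 0 ≤ s) (h : v^2 ≤ s^2) : v ≤ s := by
  nlinarith [sq_nonneg (v - s), sq_nonneg (v + s)]

lemma core_lb (ρ t u m X Z : ℝ) (hρ : 0 < ρ) (ht : 0 ≤ t) (hu : 0 < u)
    (hlt : u < ρ + t) (hsum : ρ + t + u < π)
    (hΨ : ∀ β, max 0 (ρ - u) ≤ β → β ≤ ρ + u → β < π →
      0 ≤ Real.sin u * Real.cos (m + β) - Real.sin (ρ+t) * Real.cos β
          + Real.cos ρ * Real.sin (ρ+t-u))
    (hm1 : m + u + ρ ≤ π)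
    (hm2 : ρ ≤ u ∨ m + ρ ≤ t + u)
    (hXZ : X^2 + Z^2 ≤ 1) (hZ : Real.cos ρ ≤ Z) :
    m ≤ Real.arccos (Real.sin (ρ+t) * X + Real.cos (ρ+t) * Z)
        - Real.arccos (Real.sin u * X + Real.cos u * Z) := by
  have hpi := Real.pi_pos
  have hsα : 0 < Real.sin (ρ+t) := Real.sin_pos_of_pos_of_lt_pi (by linarith) (by linarith)
  have hsu : 0 < Real.sin u := Real.sin_pos_of_pos_of_lt_pi hu (by linarith)
  have hw : 0 < Real.sin (ρ+t-u) := Real.sin_pos_of_pos_of_lt_pi (by linarith) (by linarith)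
  set A := Real.sin (ρ+t) * X + Real.cos (ρ+t) * Z with hA
  set B := Real.sin u * X + Real.cos u * Z with hB
  have pA := Real.sin_sq_add_cos_sq (ρ+t)
  have pu := Real.sin_sq_add_cos_sq u
  have hA2 : A^2 ≤ 1 := by
    have e : (Real.sin (ρ+t) * X + Real.cos (ρ+t) * Z)^2
        + (Real.sin (ρ+t) * Z - Real.cos (ρ+t) * X)^2
        = (X^2+Z^2) * (Real.sin (ρ+t)^2 + Real.cos (ρ+t)^2) := by ring
    rw [pA, mul_one] at e
    rw [hA]
    have := sq_nonneg (Real.sin (ρ+t) * Z - Real.cos (ρ+t) * X)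
    linarith
  have hA1 := (abs_facts hA2).1
  have hAu := (abs_facts hA2).2
  have hB2 : B^2 ≤ 1 := by
    have e : (Real.sin u * X + Real.cos u * Z)^2 + (Real.sin u * Z - Real.cos u * X)^2
        = (X^2+Z^2) * (Real.sin u^2 + Real.cos u^2) := by ring
    rw [pu, mul_one] at e
    rw [hB]
    have := sq_nonneg (Real.sin u * Z - Real.cos u * X)
    linarith
  have hB1 := (abs_facts hB2).1
  have hBu := (abs_facts hB2).2
  have hZ2 : Z^2 ≤ 1 := by have := sq_nonneg X; linarith
  have hZ1 := (abs_facts hZ2).2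
  have hZm1 := (abs_facts hZ2).1
  set θ := Real.arccos Z with hθdef
  have hθρ : θ ≤ ρ := by
    have h1 : Real.arccos Z ≤ Real.arccos (Real.cos ρ) := arccos_anti hZ
    rwa [Real.arccos_cos hρ.le (by linarith)] at h1
  have hθ0 : 0 ≤ θ := Real.arccos_nonneg Z
  have hcθ : Real.cos θ = Z := Real.cos_arccos hZm1 hZ1
  have hsθ : Real.sin θ = Real.sqrt (1 - Z^2) := Real.sin_arccos Z
  have hXsθ : -Real.sin θ ≤ X := by
    rw [hsθ]
    exact neg_sqrt_le (by linarith : X^2 ≤ 1 - Z^2)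
  have hBlow : Real.cos (u + θ) ≤ B := by
    rw [Real.cos_add, hcθ, hB]
    have h1 := mul_le_mul_of_nonneg_left hXsθ hsu.le
    nlinarith [h1]
  have hBlow2 : Real.cos (u + ρ) ≤ B :=
    le_trans (Real.cos_le_cos_of_nonneg_of_le_pi (by linarith) (by linarith) (by linarith)) hBlow
  have hBm1 : -1 < B := by
    have h1 : Real.cos π < Real.cos (u + ρ) :=
      Real.cos_lt_cos_of_nonneg_of_le_pi (by linarith) le_rfl (by linarith)
    rw [Real.cos_pi] at h1; linarith
  set β := Real.arccos B with hβdef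
  have hβ0 : 0 ≤ β := Real.arccos_nonneg B
  have hβpi : β ≤ π := Real.arccos_le_pi B
  have hcβ : Real.cos β = B := Real.cos_arccos hBm1.le hBu
  have hβπ' : β < π := by
    rcases lt_or_eq_of_le hβpi with h | h
    · exact h
    · exfalso; rw [h, Real.cos_pi] at hcβ; linarith
  have hβle : β ≤ u + ρ := by
    have h1 := arccos_anti hBlow2
    rwa [Real.arccos_cos (by linarith) (by linarith)] at h1
  by_cases hmb : m + β ≤ 0
  · have := Real.arccos_nonneg A; linarith
  push_neg at hmb
  have hkey : A ≤ Real.cos (m + β) := by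
    by_cases hba : max 0 (ρ - u) ≤ β
    · -- branch b
      have hΨβ := hΨ β hba (by linarith) hβπ'
      have hid : Real.sin (ρ+t) * B - Real.sin u * A = Z * Real.sin (ρ+t-u) := by
        rw [Real.sin_sub, hA, hB]; ring
      have h2 : Real.sin u * A ≤ Real.sin u * Real.cos (m+β) := by
        have h3 : Real.cos ρ * Real.sin (ρ+t-u) ≤ Z * Real.sin (ρ+t-u) :=
          mul_le_mul_of_nonneg_right hZ hw.le
        rw [hcβ] at hΨβ
        linarith
      exact le_of_mul_le_mul_left h2 hsu
    · -- branch a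
      push_neg at hba
      have hρu : u < ρ := by
        by_contra h; push_neg at h
        rw [max_eq_left (by linarith)] at hba; linarith
      rw [max_eq_right (by linarith)] at hba
      have hm2' : m + ρ ≤ t + u := by
        rcases hm2 with h | h
        · linarith
        · exact h
      have hsβ0 : 0 ≤ Real.sin β := Real.sin_nonneg_of_nonneg_of_le_pi hβ0 hβpi
      have hVle : X * Real.cos u - Z * Real.sin u ≤ Real.sin β := by
        apply le_of_sq_le hsβ0
        have e : (X*Real.cos u - Z*Real.sin u)^2 + (Real.sin u * X + Real.cos u * Z)^2
            = (X^2+Z^2)*(Real.sin u^2 + Real.cos u^2) := by ring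
        rw [pu, mul_one] at e
        have e2 : Real.sin β ^2 = 1 - B^2 := by
          have h4 := Real.sin_sq_add_cos_sq β
          rw [hcβ] at h4; linarith
        rw [e2, hB]
        linarith
      have hAeq : A = B * Real.cos (ρ+t-u)
          + (X * Real.cos u - Z * Real.sin u) * Real.sin (ρ+t-u) := by
        rw [Real.cos_sub, Real.sin_sub, hA, hB]
        linear_combination (-(Real.sin (ρ+t) * X + Real.cos (ρ+t) * Z))*pu
      have h4 : A ≤ Real.cos (ρ+t-u-β) := by
        rw [show ρ+t-u-β = (ρ+t-u)-β from by ring, Real.cos_sub, hcβ]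
        have h5 : (X * Real.cos u - Z * Real.sin u) * Real.sin (ρ+t-u)
            ≤ Real.sin β * Real.sin (ρ+t-u) := mul_le_mul_of_nonneg_right hVle hw.le
        linarith [hAeq]
      have h5 : Real.cos (ρ+t-u-β) ≤ Real.cos (m + β) := by
        have e2 : m + β ≤ ρ+t-u-β := by linarith
        exact Real.cos_le_cos_of_nonneg_of_le_pi hmb.le (by linarith) e2
      linarith
  have h6 : Real.arccos (Real.cos (m+β)) ≤ Real.arccos A := arccos_anti hkey
  rw [Real.arccos_cos hmb.le (by linarith)] at h6
  linarith


lemma id_corner (ρ t u : ℝ) :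
    Real.sin u * Real.cos t - Real.sin (ρ+t) * Real.cos (ρ-u)
      + Real.cos ρ * Real.sin (ρ+t-u) = 0 := by
  rw [show ρ+t-u = (ρ+t)-u from by ring, Real.sin_sub, Real.sin_add, Real.cos_add, Real.cos_sub]
  linear_combination (-(Real.sin u * Real.cos t)) * (Real.sin_sq_add_cos_sq ρ)

lemma id_anticorner (ρ t u : ℝ) :
    Real.sin (ρ+t) * Real.cos (ρ+u) - Real.cos ρ * Real.sin (ρ+t-u)
      = Real.sin u * Real.cos (2*ρ+t) := by
  rw [show ρ+t-u = (ρ+t)-u from by ring, show 2*ρ+t = ρ+(ρ+t) from by ring,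
    Real.sin_sub, Real.cos_add ρ (ρ+t), Real.cos_add ρ u, Real.sin_add ρ t, Real.cos_add ρ t]
  linear_combination (0:ℝ) * (Real.sin_sq_add_cos_sq ρ)

lemma psi_case1 (ρ t u : ℝ) (hρ : 0 < ρ) (ht : 0 ≤ t) (hu : 0 < u)
    (hlt : u < ρ + t) (hsum : ρ + t + u < π) (huρ : u ≤ ρ)
    (hE1 : 0 ≤ Real.sin (ρ+t) * Real.sin (ρ-u) - Real.sin u * Real.sin t) :
    ∀ β, max 0 (ρ-u) ≤ β → β ≤ ρ+u → β < π →
      0 ≤ Real.sin u * Real.cos ((t+u-ρ) + β) - Real.sin (ρ+t) * Real.cos β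
          + Real.cos ρ * Real.sin (ρ+t-u) := by
  intro β hβ0 hβ1 hβπ
  have hpi := Real.pi_pos
  rw [max_eq_right (by linarith : (0:ℝ) ≤ ρ-u)] at hβ0
  have hsc := Real.sin_add (t+u-ρ) (ρ-u)
  rw [show (t+u-ρ)+(ρ-u) = t from by ring] at hsc
  have hcc0 := Real.cos_add (t+u-ρ) (ρ-u)
  rw [show (t+u-ρ)+(ρ-u) = t from by ring] at hcc0
  have hcc1 := Real.cos_add (t+u-ρ) (ρ+u)
  rw [show (t+u-ρ)+(ρ+u) = t+2*u from by ring] at hcc1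
  have key := sinusoid_nonneg (Real.sin u * Real.cos (t+u-ρ) - Real.sin (ρ+t))
      (-(Real.sin u * Real.sin (t+u-ρ))) (Real.cos ρ * Real.sin (ρ+t-u))
      (ρ-u) β (ρ+u) (by linarith) hβ0 hβ1 (by linarith) hβπ ?_ ?_ ?_
  · rw [Real.cos_add]
    linarith [key]
  · -- value at ρ-u is 0
    have hic := id_corner ρ t u
    linear_combination (-(Real.sin u)) * hcc0 + hic
  · -- derivative at ρ-u
    have e : (-(Real.sin u * Real.sin (t+u-ρ))) * Real.cos (ρ-u)
          - (Real.sin u * Real.cos (t+u-ρ) - Real.sin (ρ+t)) * Real.sin (ρ-u)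
        = Real.sin (ρ+t) * Real.sin (ρ-u) - Real.sin u * Real.sin t := by
      linear_combination Real.sin u * hsc
    rw [e]; exact hE1
  · -- value at ρ+u
    have hac := id_anticorner ρ t u
    have hcmp : Real.cos (2*ρ+t) ≤ Real.cos (t+2*u) := by
      by_cases h2 : 2*ρ+t ≤ π
      · exact Real.cos_le_cos_of_nonneg_of_le_pi (by linarith) h2 (by linarith)
      · push_neg at h2
        rw [show Real.cos (2*ρ+t) = Real.cos (2*π - (2*ρ+t)) from (Real.cos_two_pi_sub _).symm]
        exact Real.cos_le_cos_of_nonneg_of_le_pi (by linarith) (by linarith) (by linarith)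
    have hsu : 0 < Real.sin u := Real.sin_pos_of_pos_of_lt_pi hu (by linarith)
    have e : (Real.sin u * Real.cos (t+u-ρ) - Real.sin (ρ+t)) * Real.cos (ρ+u)
          + (-(Real.sin u * Real.sin (t+u-ρ))) * Real.sin (ρ+u)
          + Real.cos ρ * Real.sin (ρ+t-u)
        = Real.sin u * Real.cos (t+2*u) - Real.sin u * Real.cos (2*ρ+t) := by
      linear_combination (-(Real.sin u)) * hcc1 - hac
    rw [e]
    nlinarith [hcmp, hsu]


lemma E1_of_cot (ρ t u : ℝ) (hρ : 0 < ρ) (ht : 0 ≤ t) (hu : 0 < u)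
    (hlt : u < ρ + t) (hsum : ρ + t + u < π)
    (h : Real.cot u ≥ 2 * Real.cot ρ - Real.cot (ρ + t)) :
    0 ≤ Real.sin (ρ+t) * Real.sin (ρ-u) - Real.sin u * Real.sin t := by
  have hpi := Real.pi_pos
  have hsρ : 0 < Real.sin ρ := Real.sin_pos_of_pos_of_lt_pi hρ (by linarith)
  have hsα : 0 < Real.sin (ρ+t) := Real.sin_pos_of_pos_of_lt_pi (by linarith) (by linarith)
  have hsu : 0 < Real.sin u := Real.sin_pos_of_pos_of_lt_pi hu (by linarith)
  have key : Real.sin (ρ+t) * Real.sin (ρ-u) - Real.sin u * Real.sin t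
      = Real.sin u * Real.sin ρ * Real.sin (ρ+t)
        * (Real.cot u - (2 * Real.cot ρ - Real.cot (ρ+t))) := by
    rw [Real.cot_eq_cos_div_sin, Real.cot_eq_cos_div_sin, Real.cot_eq_cos_div_sin,
      Real.sin_sub, show Real.sin t = Real.sin ((ρ+t) - ρ) from by ring_nf,
      Real.sin_sub (ρ+t) ρ]
    field_simp
    ring
  rw [key]
  have h2 : 0 ≤ Real.cot u - (2 * Real.cot ρ - Real.cot (ρ+t)) := by linarith
  positivity
lemma u_le_rho (ρ t u : ℝ) (hρ : 0 < ρ) (ht : 0 ≤ t) (hu : 0 < u)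
    (hlt : u < ρ + t) (hsum : ρ + t + u < π)
    (hE1 : 0 ≤ Real.sin (ρ+t) * Real.sin (ρ-u) - Real.sin u * Real.sin t) :
    u ≤ ρ := by
  have hpi := Real.pi_pos
  have hsα : 0 < Real.sin (ρ+t) := Real.sin_pos_of_pos_of_lt_pi (by linarith) (by linarith)
  have hsu : 0 < Real.sin u := Real.sin_pos_of_pos_of_lt_pi hu (by linarith)
  have hst : 0 ≤ Real.sin t := Real.sin_nonneg_of_nonneg_of_le_pi ht (by linarith)
  by_contra hcon
  push_neg at hcon
  have h1 : Real.sin (ρ - u) < 0 := by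
    apply Real.sin_neg_of_neg_of_neg_pi_lt (by linarith) (by linarith)
  nlinarith [mul_pos hsα (neg_pos.mpr h1), mul_nonneg hsu.le hst]

lemma case1_lb (ρ t u : ℝ) (hρ : 0 < ρ) (ht : 0 ≤ t) (hu : 0 < u)
    (hlt : u < ρ + t) (hsum : ρ + t + u < π)
    (hE1 : 0 ≤ Real.sin (ρ+t) * Real.sin (ρ-u) - Real.sin u * Real.sin t)
    (X Z : ℝ) (hXZ : X^2 + Z^2 ≤ 1) (hZ : Real.cos ρ ≤ Z) :
    t - ρ + u ≤ Real.arccos (Real.sin (ρ+t) * X + Real.cos (ρ+t) * Z)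
        - Real.arccos (Real.sin u * X + Real.cos u * Z) := by
  have huρ := u_le_rho ρ t u hρ ht hu hlt hsum hE1
  have key := core_lb ρ t u (t+u-ρ) X Z hρ ht hu hlt hsum
    (psi_case1 ρ t u hρ ht hu hlt hsum huρ hE1)
    (by linarith) (Or.inr (by linarith)) hXZ hZ
  linarith

-- the u = 0 lower bound
lemma case0_lb (ρ t : ℝ) (hρ : 0 < ρ) (ht : 0 ≤ t) (hlt : 0 < ρ + t)
    (hsum : ρ + t < π)
    (X Z : ℝ) (hXZ : X^2 + Z^2 ≤ 1) (hZ : Real.cos ρ ≤ Z) :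
    t - ρ ≤ Real.arccos (Real.sin (ρ+t) * X + Real.cos (ρ+t) * Z) - Real.arccos Z := by
  have hpi := Real.pi_pos
  have hsα : 0 < Real.sin (ρ+t) := Real.sin_pos_of_pos_of_lt_pi (by linarith) (by linarith)
  have hZ2 : Z^2 ≤ 1 := by nlinarith [sq_nonneg X]
  have hZ1 : Z ≤ 1 := by nlinarith [sq_nonneg (Z-1)]
  have hZm1 : -1 ≤ Z := by nlinarith [sq_nonneg (Z+1)]
  set θ := Real.arccos Z with hθdef
  have hθρ : θ ≤ ρ := by
    have h1 : Real.arccos Z ≤ Real.arccos (Real.cos ρ) := arccos_anti hZ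
    rwa [Real.arccos_cos hρ.le (by linarith)] at h1
  have hθ0 : 0 ≤ θ := Real.arccos_nonneg Z
  have hcθ : Real.cos θ = Z := Real.cos_arccos hZm1 hZ1
  have hsθ : Real.sin θ = Real.sqrt (1 - Z^2) := Real.sin_arccos Z
  have hXle : X ≤ Real.sin θ := by
    rw [hsθ]
    nlinarith [Real.sq_sqrt (by linarith : (0:ℝ) ≤ 1 - Z^2), Real.sqrt_nonneg (1-Z^2),
      sq_nonneg (X - Real.sqrt (1-Z^2)), sq_nonneg (X + Real.sqrt (1-Z^2))]
  have hA : Real.sin (ρ+t) * X + Real.cos (ρ+t) * Z ≤ Real.cos (ρ+t-θ) := by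
    rw [show ρ+t-θ = (ρ+t)-θ from by ring, Real.cos_sub, hcθ]
    nlinarith [mul_le_mul_of_nonneg_left hXle hsα.le]
  have h6 : Real.arccos (Real.cos (ρ+t-θ))
      ≤ Real.arccos (Real.sin (ρ+t) * X + Real.cos (ρ+t) * Z) := arccos_anti hA
  rw [Real.arccos_cos (by linarith) (by linarith)] at h6
  linarith


lemma hwS_id (x u : ℝ) : Real.sin (x-u) + Real.sin (x+u) = 2*Real.sin x*Real.cos u := by
  rw [Real.sin_sub, Real.sin_add]; ring

lemma hid0_id (x u : ℝ) :
    Real.sin u*Real.cos (x-u) + Real.cos u*Real.sin (x-u) = Real.sin x := by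
  rw [Real.cos_sub, Real.sin_sub]
  linear_combination Real.sin x * Real.sin_sq_add_cos_sq u

lemma hcw2_id (x u : ℝ) :
    2*Real.sin x*Real.sin u*Real.cos (x-u) + Real.sin (x-u)^2 = Real.sin x^2 + Real.sin u^2 := by
  rw [Real.cos_sub, Real.sin_sub]
  linear_combination Real.sin x^2 * Real.sin_sq_add_cos_sq u
    + Real.sin u^2 * Real.sin_sq_add_cos_sq x

lemma hSw_id (x u : ℝ) :
    Real.sin (x+u)*Real.sin (x-u) = Real.sin x^2 - Real.sin u^2 := by
  rw [Real.sin_add, Real.sin_sub]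
  linear_combination Real.sin x^2 * Real.sin_sq_add_cos_sq u
    - Real.sin u^2 * Real.sin_sq_add_cos_sq x

lemma K1_id (ρ t u : ℝ) :
    Real.sin ρ*Real.sin (ρ+t-u)
      = Real.sin u*Real.sin t + Real.sin (ρ+t)*Real.sin (ρ-u) := by
  rw [show ρ+t-u = (ρ+t)-u from by ring, Real.sin_sub (ρ+t) u, Real.sin_sub ρ u,
    show Real.sin t = Real.sin ((ρ+t)-ρ) from by ring_nf, Real.sin_sub (ρ+t) ρ]
  ring

lemma K2_id (ρ t u : ℝ) :
    Real.sin ρ*Real.sin (ρ+t-u)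
      = Real.sin (ρ+t)*Real.sin (ρ+u) - Real.sin u*Real.sin (2*ρ+t) := by
  rw [show ρ+t-u = (ρ+t)-u from by ring, Real.sin_sub (ρ+t) u, Real.sin_add ρ u,
    show (2*ρ+t) = ρ+(ρ+t) from by ring, Real.sin_add ρ (ρ+t)]
  ring

lemma P2S1_id (ρ t u : ℝ) :
    Real.cos (ρ+t-u) - Real.cos (t+u-ρ) = -(2*Real.sin t*Real.sin (ρ-u)) := by
  rw [show ρ+t-u = (ρ-u)+t from by ring, Real.cos_add (ρ-u) t,
    show t+u-ρ = t-(ρ-u) from by ring, Real.cos_sub t (ρ-u)]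
  ring

lemma P2S2_id (ρ t u : ℝ) :
    Real.cos (ρ+t-u) - Real.cos (3*ρ+t+u) = 2*Real.sin (2*ρ+t)*Real.sin (ρ+u) := by
  rw [show ρ+t-u = (2*ρ+t)-(ρ+u) from by ring, Real.cos_sub (2*ρ+t) (ρ+u),
    show 3*ρ+t+u = (2*ρ+t)+(ρ+u) from by ring, Real.cos_add (2*ρ+t) (ρ+u)]
  ring

lemma id_corner2 (ρ t u : ℝ) :
    Real.sin (ρ+t)*Real.cos (ρ-u) - Real.cos ρ*Real.sin (ρ+t-u) = Real.sin u*Real.cos t := by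
  rw [show ρ+t-u = (ρ+t)-u from by ring, Real.cos_sub ρ u, Real.sin_sub (ρ+t) u,
    show Real.cos t = Real.cos ((ρ+t)-ρ) from by ring_nf, Real.cos_sub (ρ+t) ρ]
  ring

lemma id_E2 (ρ t u : ℝ) :
    Real.sin ρ*Real.sin (ρ+t+u) - 2*Real.cos ρ*Real.sin u*Real.sin (ρ+t)
      = Real.sin (ρ+t)*Real.sin (ρ-u) - Real.sin u*Real.sin t := by
  rw [show ρ+t+u = (ρ+t)+u from by ring, Real.sin_add (ρ+t) u, Real.sin_sub ρ u,
    show Real.sin t = Real.sin ((ρ+t)-ρ) from by ring_nf, Real.sin_sub (ρ+t) ρ]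
  ring


lemma H_cr (a b c d e : ℝ) (h : a*b < 2*c*d*e) (ha : 0 < a) (hb : 0 < b)
    (hd : 0 < d) (he : 0 < e) : 0 < c := by nlinarith [mul_pos ha hb, mul_pos hd he]

lemma H_Xlt (a b c d e : ℝ) (ha : 0 < a) (h : a*b < 2*c*d*e) : a^2*b < a*(2*e*d*c) := by
  nlinarith

lemma H_O (P x y s : ℝ) (hP : 0 < P) (e : 2*P*(x - y) = s^2) : y ≤ x := by
  nlinarith [sq_nonneg s]

lemma H_Qcw (P x y s w : ℝ) (hP : 0 < P) (e : 2*P*x = 2*P*y + s^2*w^2) : y ≤ x := by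
  nlinarith [sq_nonneg (s*w)]

lemma H_sqlt (x r c : ℝ) (h0 : 0 < x) (h1 : x < r) (pr : r^2 + c^2 = 1) : x^2 + c^2 < 1 := by
  nlinarith

lemma H_CSlt (a b x z : ℝ) (p : a^2+b^2 = 1) (h : x^2+z^2 < 1) : (a*x+b*z)^2 < 1 := by
  nlinarith [sq_nonneg (a*z - b*x)]

lemma H_absle (x : ℝ) (h : x^2 < 1) : -1 < x ∧ x < 1 := by
  constructor
  · nlinarith [sq_nonneg (x+1)]
  · nlinarith [sq_nonneg (x-1)]

lemma H_Q1 (s Q c : ℝ) (hs : 0 < s) (h : s^2*(1-Q^2) = c) (hc : 0 ≤ c) (hQm : -1 ≤ Q) :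
    Q ≤ 1 := by
  by_contra hc1
  push_neg at hc1
  have h2 : 0 < Q^2 - 1 := by nlinarith
  nlinarith [mul_pos (mul_pos hs hs) h2]

lemma H_g1R (s x y A C : ℝ) (hs : 0 < s) (hcs : y ≤ x) (hAC : A - C = s*y) :
    0 ≤ s*x - A + C := by nlinarith

lemma H_psi0 (s1 s2 w sr cr c2 Q : ℝ) (hs1 : 0 < s1) (hw : 0 ≤ w) (hcc : c2 ≤ cr)
    (e : 2*s1*((s2*Q - s1) + cr*w) = sr^2*w^2 + 2*s1*w*(cr-c2)) :
    0 ≤ (s2*Q - s1) + cr*w := by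
  nlinarith [sq_nonneg (sr*w), mul_nonneg (mul_nonneg hs1.le hw) (sub_nonneg.mpr hcc)]

lemma H_sinle (d s c : ℝ) (e : d = 2*s*c) (hs : 0 ≤ s) (hc : 0 ≤ c) : 0 ≤ d := by
  nlinarith [mul_nonneg hs hc]

lemma H_contra (s1 s2 st sru : ℝ) (h1 : s2 ≤ s1) (h2 : st ≤ sru) (h3 : 0 ≤ st)
    (h4 : 0 ≤ s1) (h5 : s1*sru < s2*st) : False := by nlinarith

lemma H_Blow (s2 XS sr c2 cr : ℝ) (h : 0 < s2*(XS+sr)) :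
    cr*c2 - sr*s2 ≤ s2*XS + c2*cr := by nlinarith

set_option maxHeartbeats 1600000 in
lemma case2_main (ρ t u : ℝ) (hρ : 0 < ρ) (ht : 0 ≤ t) (hu : 0 < u)
    (hlt : u < ρ + t) (hsum : ρ + t + u < π)
    (hE2 : Real.sin ρ * Real.sin (ρ+t+u) < 2 * Real.cos ρ * Real.sin u * Real.sin (ρ+t)) :
    ∃ XS, 0 < XS ∧ XS < Real.sin ρ ∧
      (∀ X Z, X^2 + Z^2 ≤ 1 → Real.cos ρ ≤ Z →
        Real.arccos (Real.cos (ρ+t-u) + Real.sin ρ^2 * Real.sin (ρ+t-u)^2 / (2*Real.sin u*Real.sin (ρ+t)))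
          ≤ Real.arccos (Real.sin (ρ+t)*X + Real.cos (ρ+t)*Z)
            - Real.arccos (Real.sin u*X + Real.cos u*Z)) ∧
      Real.arccos (Real.sin (ρ+t)*XS + Real.cos (ρ+t)*Real.cos ρ)
        - Real.arccos (Real.sin u*XS + Real.cos u*Real.cos ρ)
        = Real.arccos (Real.cos (ρ+t-u) + Real.sin ρ^2 * Real.sin (ρ+t-u)^2 / (2*Real.sin u*Real.sin (ρ+t))) := by
  have hpi := Real.pi_pos
  have hs1 : 0 < Real.sin (ρ+t) := Real.sin_pos_of_pos_of_lt_pi (by linarith) (by linarith)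
  have hs2 : 0 < Real.sin u := Real.sin_pos_of_pos_of_lt_pi hu (by linarith)
  have hsr : 0 < Real.sin ρ := Real.sin_pos_of_pos_of_lt_pi hρ (by linarith)
  have hw : 0 < Real.sin (ρ+t-u) := Real.sin_pos_of_pos_of_lt_pi (by linarith) (by linarith)
  have hS : 0 < Real.sin (ρ+t+u) := Real.sin_pos_of_pos_of_lt_pi (by linarith) (by linarith)
  have hcr : 0 < Real.cos ρ := H_cr _ _ _ _ _ hE2 hsr hS hs2 hs1
  have hρ2 : ρ < π/2 := by
    by_contra hcon
    push_neg at hcon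
    have := Real.cos_nonpos_of_pi_div_two_le_of_le hcon (by linarith)
    linarith
  have pr : Real.sin ρ^2 + Real.cos ρ^2 = 1 := Real.sin_sq_add_cos_sq ρ
  have pu : Real.sin u^2 + Real.cos u^2 = 1 := Real.sin_sq_add_cos_sq u
  have p1 : Real.sin (ρ+t)^2 + Real.cos (ρ+t)^2 = 1 := Real.sin_sq_add_cos_sq (ρ+t)
  have hw_exp : Real.sin (ρ+t-u) = Real.sin (ρ+t)*Real.cos u - Real.cos (ρ+t)*Real.sin u := by
    rw [show ρ+t-u = (ρ+t)-u from by ring, Real.sin_sub (ρ+t) u]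
  have hS_exp : Real.sin (ρ+t+u) = Real.sin (ρ+t)*Real.cos u + Real.cos (ρ+t)*Real.sin u := by
    rw [show ρ+t+u = (ρ+t)+u from by ring, Real.sin_add (ρ+t) u]
  have hid0 := hid0_id (ρ+t) u
  have hcw2 := hcw2_id (ρ+t) u
  have hwS := hwS_id (ρ+t) u
  have hSw := hSw_id (ρ+t) u
  have hK1 := K1_id ρ t u
  have hK2 := K2_id ρ t u
  have hP1 := P2S1_id ρ t u
  have hP2 := P2S2_id ρ t u
  have hC2 := id_corner2 ρ t u
  have hAC := id_anticorner ρ t u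
  have hE2' : Real.sin (ρ+t)*Real.sin (ρ-u) < Real.sin u*Real.sin t := by
    have h := id_E2 ρ t u
    linarith
  have hden : (0:ℝ) < 2*Real.sin (ρ+t)*Real.sin u*Real.cos ρ := by positivity
  set XS := Real.sin ρ^2*Real.sin (ρ+t+u)/(2*Real.sin (ρ+t)*Real.sin u*Real.cos ρ) with hXSdef
  have hX : 2*Real.sin (ρ+t)*Real.sin u*Real.cos ρ*XS = Real.sin ρ^2*Real.sin (ρ+t+u) := by
    rw [hXSdef]; field_simp
  have hXpos : 0 < XS := by
    rw [hXSdef]; exact div_pos (mul_pos (pow_pos hsr 2) hS) hden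
  have hXlt : XS < Real.sin ρ := by
    rw [hXSdef, div_lt_iff₀ hden]
    exact H_Xlt _ _ _ _ _ hsr hE2
  set Q := Real.cos (ρ+t-u) + Real.sin ρ^2 * Real.sin (ρ+t-u)^2 / (2*Real.sin u*Real.sin (ρ+t)) with hQdef
  have hQ : 2*Real.sin u*Real.sin (ρ+t)*Q = 2*Real.sin u*Real.sin (ρ+t)*Real.cos (ρ+t-u) + Real.sin ρ^2*Real.sin (ρ+t-u)^2 := by
    rw [hQdef]; field_simp
  set A := Real.sin (ρ+t)*XS + Real.cos (ρ+t)*Real.cos ρ with hAdef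
  set B := Real.sin u*XS + Real.cos u*Real.cos ρ with hBdef
  have hBA : Real.sin (ρ+t)*B - Real.sin u*A = Real.cos ρ*Real.sin (ρ+t-u) := by
    rw [hAdef, hBdef, hw_exp]; ring
  have hG2' : Real.sin u*Q + Real.cos ρ*Real.sin (ρ+t-u)*B = Real.sin (ρ+t) := by
    have key : 2*Real.sin (ρ+t)*(Real.sin u*Q + Real.cos ρ*Real.sin (ρ+t-u)*B - Real.sin (ρ+t)) = 0 := by
      rw [hBdef]
      linear_combination hQ + Real.sin (ρ+t-u)*hX + Real.sin ρ^2*Real.sin (ρ+t-u)*hwS + 2*Real.sin (ρ+t)*Real.cos u*Real.sin (ρ+t-u)*pr + 2*Real.sin (ρ+t)*hid0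
    rcases mul_eq_zero.mp key with h | h
    · exfalso; linarith
    · linarith
  have hGq : 2*Real.sin (ρ+t)*Real.sin u*Q = Real.sin (ρ+t)^2 + Real.sin u^2 - Real.cos ρ^2*Real.sin (ρ+t-u)^2 := by
    linear_combination hQ + hcw2 + Real.sin (ρ+t-u)^2*pr
  have hO3 : Real.cos (t+u-ρ) ≤ Q := by
    refine H_O (Real.sin (ρ+t)*Real.sin u) _ _ (Real.sin u*Real.sin t - Real.sin (ρ+t)*Real.sin (ρ-u)) (mul_pos hs1 hs2) ?_
    linear_combination hQ + 2*Real.sin (ρ+t)*Real.sin u*hP1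
      + (Real.sin ρ*Real.sin (ρ+t-u) + Real.sin u*Real.sin t + Real.sin (ρ+t)*Real.sin (ρ-u))*hK1
  have hO2 : Real.cos (3*ρ+t+u) ≤ Q := by
    refine H_O (Real.sin (ρ+t)*Real.sin u) _ _ (Real.sin (ρ+t)*Real.sin (ρ+u) + Real.sin u*Real.sin (2*ρ+t)) (mul_pos hs1 hs2) ?_
    linear_combination hQ + 2*Real.sin (ρ+t)*Real.sin u*hP2
      + (Real.sin ρ*Real.sin (ρ+t-u) + Real.sin (ρ+t)*Real.sin (ρ+u) - Real.sin u*Real.sin (2*ρ+t))*hK2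
  have hQcw : Real.cos (ρ+t-u) ≤ Q := H_Qcw (Real.sin u*Real.sin (ρ+t)) _ _ (Real.sin ρ) (Real.sin (ρ+t-u)) (mul_pos hs2 hs1)
    (by linear_combination hQ)
  have hQm1 : -1 ≤ Q := le_trans (Real.neg_one_le_cos (ρ+t-u)) hQcw
  have hXsq : XS^2 + Real.cos ρ^2 < 1 := H_sqlt _ _ _ hXpos hXlt pr
  have hB2 : B^2 < 1 := by rw [hBdef]; exact H_CSlt _ _ _ _ pu hXsq
  have hA2 : A^2 < 1 := by rw [hAdef]; exact H_CSlt _ _ _ _ p1 hXsq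
  have hB1 : -1 < B := (H_absle _ hB2).1
  have hBu : B < 1 := (H_absle _ hB2).2
  have hA1 : -1 < A := (H_absle _ hA2).1
  have hAu : A < 1 := (H_absle _ hA2).2
  have hG3 : Real.sin u^2*(1 - Q^2) = Real.cos ρ^2*Real.sin (ρ+t-u)^2*(1 - B^2) := by
    linear_combination (Real.cos ρ*Real.sin (ρ+t-u)*B + Real.sin (ρ+t) - Real.sin u*Q)*hG2' - hGq
  have hQ1 : Q ≤ 1 := H_Q1 (Real.sin u) _ (Real.cos ρ^2*Real.sin (ρ+t-u)^2*(1 - B^2)) hs2 hG3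
    (mul_nonneg (by positivity) (by linarith : (0:ℝ) ≤ 1 - B^2)) hQm1
  have hcm : Real.cos (Real.arccos Q) = Q := Real.cos_arccos hQm1 hQ1
  have hm0 : 0 ≤ Real.arccos Q := Real.arccos_nonneg Q
  have hsmv : Real.sin (Real.arccos Q) = Real.sqrt (1 - Q^2) := Real.sin_arccos Q
  have hSBsq : Real.sqrt (1 - B^2)^2 = 1 - B^2 := Real.sq_sqrt (by linarith : (0:ℝ) ≤ 1 - B^2)
  have hSBnn : 0 ≤ Real.sqrt (1 - B^2) := Real.sqrt_nonneg _
  have hs2SQ : Real.sin u*Real.sqrt (1 - Q^2) = Real.cos ρ*Real.sin (ρ+t-u)*Real.sqrt (1 - B^2) := by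
    have e1 : Real.sin u*Real.sqrt (1 - Q^2) = Real.sqrt (Real.sin u^2*(1 - Q^2)) := by
      rw [Real.sqrt_mul (sq_nonneg _), Real.sqrt_sq hs2.le]
    have e2 : Real.cos ρ*Real.sin (ρ+t-u)*Real.sqrt (1 - B^2) = Real.sqrt ((Real.cos ρ*Real.sin (ρ+t-u))^2*(1 - B^2)) := by
      rw [Real.sqrt_mul (sq_nonneg _), Real.sqrt_sq (by positivity : (0:ℝ) ≤ Real.cos ρ*Real.sin (ρ+t-u))]
    rw [e1, e2]
    congr 1
    linear_combination hG3
  have hmQcw : Real.arccos Q ≤ ρ+t-u := by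
    have h := arccos_anti hQcw
    rwa [Real.arccos_cos (by linarith) (by linarith)] at h
  have hg1R : 0 ≤ (Real.sin u*Q - Real.sin (ρ+t))*Real.cos (ρ+u) + (-(Real.sin u*Real.sqrt (1 - Q^2)))*Real.sin (ρ+u)
      + Real.cos ρ*Real.sin (ρ+t-u) := by
    have ecos : Real.cos (Real.arccos Q + (ρ+u))
        = Q*Real.cos (ρ+u) - Real.sqrt (1 - Q^2)*Real.sin (ρ+u) := by
      rw [Real.cos_add, hcm, hsmv]
    have hcs : Real.cos (2*ρ+t) ≤ Real.cos (Real.arccos Q + (ρ+u)) := by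
      by_cases h2ρ : 2*ρ+t ≤ π
      · exact Real.cos_le_cos_of_nonneg_of_le_pi (by linarith) h2ρ (by linarith)
      · push_neg at h2ρ
        have hmO2 : Real.arccos Q ≤ 2*π - (3*ρ+t+u) := by
          have h3 : Real.cos (3*ρ+t+u) = Real.cos (2*π - (3*ρ+t+u)) :=
            (Real.cos_two_pi_sub _).symm
          have h4 := arccos_anti hO2
          rw [h3, Real.arccos_cos (by linarith) (by linarith)] at h4
          exact h4
        rw [show Real.cos (2*ρ+t) = Real.cos (2*π - (2*ρ+t)) from (Real.cos_two_pi_sub _).symm]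
        exact Real.cos_le_cos_of_nonneg_of_le_pi (by linarith) (by linarith) (by linarith)
    rw [ecos] at hcs
    have h9 := H_g1R (Real.sin u) (Q*Real.cos (ρ+u) - Real.sqrt (1 - Q^2)*Real.sin (ρ+u)) (Real.cos (2*ρ+t))
      (Real.sin (ρ+t)*Real.cos (ρ+u)) (Real.cos ρ*Real.sin (ρ+t-u)) hs2 hcs hAC
    linarith [h9]
  have htuρ : u ≤ ρ → ρ ≤ t+u := by
    intro huρ'
    by_contra hcon
    push_neg at hcon
    have hst : Real.sin t ≤ Real.sin (ρ-u) := by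
      have h5 := Real.sin_sub_sin (ρ-u) t
      have h6 : 0 ≤ Real.sin ((ρ-u-t)/2) :=
        Real.sin_nonneg_of_nonneg_of_le_pi (by linarith) (by linarith)
      have h7 : 0 ≤ Real.cos ((ρ-u+t)/2) :=
        Real.cos_nonneg_of_mem_Icc ⟨by linarith, by linarith⟩
      have h8 := H_sinle _ _ _ h5 h6 h7
      linarith
    have hs21 : Real.sin u ≤ Real.sin (ρ+t) := by
      have h5 := Real.sin_sub_sin (ρ+t) u
      have h6 : 0 ≤ Real.sin ((ρ+t-u)/2) :=
        Real.sin_nonneg_of_nonneg_of_le_pi (by linarith) (by linarith)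
      have h7 : 0 ≤ Real.cos ((ρ+t+u)/2) :=
        Real.cos_nonneg_of_mem_Icc ⟨by linarith, by linarith⟩
      have h8 := H_sinle _ _ _ h5 h6 h7
      linarith
    exact H_contra (Real.sin (ρ+t)) (Real.sin u) (Real.sin t) (Real.sin (ρ-u)) hs21 hst
      (Real.sin_nonneg_of_nonneg_of_le_pi ht (by linarith)) hs1.le hE2'
  have hg1L : 0 ≤ (Real.sin u*Q - Real.sin (ρ+t))*Real.cos (max 0 (ρ-u))
      + (-(Real.sin u*Real.sqrt (1 - Q^2)))*Real.sin (max 0 (ρ-u)) + Real.cos ρ*Real.sin (ρ+t-u) := by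
    rcases le_or_gt u ρ with huρ' | huρ'
    · rw [max_eq_right (by linarith : (0:ℝ) ≤ ρ-u)]
      have ecos : Real.cos (Real.arccos Q + (ρ-u))
          = Q*Real.cos (ρ-u) - Real.sqrt (1 - Q^2)*Real.sin (ρ-u) := by
        rw [Real.cos_add, hcm, hsmv]
      have hmO3 : Real.arccos Q ≤ t+u-ρ := by
        have h4 := arccos_anti hO3
        rw [Real.arccos_cos (by linarith [htuρ huρ']) (by linarith)] at h4
        exact h4
      have hcs : Real.cos t ≤ Real.cos (Real.arccos Q + (ρ-u)) :=
        Real.cos_le_cos_of_nonneg_of_le_pi (by linarith) (by linarith) (by linarith)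
      rw [ecos] at hcs
      have h9 := H_g1R (Real.sin u) (Q*Real.cos (ρ-u) - Real.sqrt (1 - Q^2)*Real.sin (ρ-u)) (Real.cos t)
        (Real.sin (ρ+t)*Real.cos (ρ-u)) (Real.cos ρ*Real.sin (ρ+t-u)) hs2 hcs hC2
      linarith [h9]
    · rw [max_eq_left (by linarith : ρ-u ≤ (0:ℝ))]
      rw [Real.cos_zero, Real.sin_zero]
      have hcc2 : Real.cos u ≤ Real.cos ρ :=
        Real.cos_le_cos_of_nonneg_of_le_pi hρ.le (by linarith) (by linarith)
      have e : 2*Real.sin (ρ+t)*((Real.sin u*Q - Real.sin (ρ+t)) + Real.cos ρ*Real.sin (ρ+t-u))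
          = Real.sin ρ^2*Real.sin (ρ+t-u)^2 + 2*Real.sin (ρ+t)*Real.sin (ρ+t-u)*(Real.cos ρ-Real.cos u) := by
        linear_combination hQ + 2*Real.sin (ρ+t)*hid0
      have h9 := H_psi0 (Real.sin (ρ+t)) (Real.sin u) (Real.sin (ρ+t-u)) (Real.sin ρ) (Real.cos ρ) (Real.cos u) Q hs1 hw.le hcc2 e
      linarith [h9]
  have hcβs : Real.cos (Real.arccos B) = B := Real.cos_arccos hB1.le hBu.le
  have hsβs : Real.sin (Real.arccos B) = Real.sqrt (1 - B^2) := Real.sin_arccos B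
  have hg0s : (Real.sin u*Q - Real.sin (ρ+t))*B + (-(Real.sin u*Real.sqrt (1 - Q^2)))*Real.sqrt (1 - B^2) + Real.cos ρ*Real.sin (ρ+t-u) = 0 := by
    have e : Real.sin u*Real.sqrt (1 - Q^2)*Real.sqrt (1 - B^2) = Real.cos ρ*Real.sin (ρ+t-u)*(1 - B^2) := by
      rw [hs2SQ, show Real.cos ρ*Real.sin (ρ+t-u)*Real.sqrt (1 - B^2)*Real.sqrt (1 - B^2) = Real.cos ρ*Real.sin (ρ+t-u)*(Real.sqrt (1 - B^2)^2) from by ring, hSBsq]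
    linear_combination B*hG2' - e
  have hg0s' : (-(Real.sin u*Real.sqrt (1 - Q^2)))*B - (Real.sin u*Q - Real.sin (ρ+t))*Real.sqrt (1 - B^2) = 0 := by
    have e : Real.sin u*Real.sqrt (1 - Q^2)*B = Real.cos ρ*Real.sin (ρ+t-u)*Real.sqrt (1 - B^2)*B := by rw [hs2SQ]
    linear_combination -e - Real.sqrt (1 - B^2)*hG2'
  have hBlow : Real.cos (ρ+u) ≤ B := by
    rw [hBdef, Real.cos_add]
    exact H_Blow (Real.sin u) XS (Real.sin ρ) (Real.cos u) (Real.cos ρ) (mul_pos hs2 (by linarith))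
  have hβs1 : Real.arccos B ≤ ρ+u := by
    have h4 := arccos_anti hBlow
    rwa [Real.arccos_cos (by linarith) (by linarith)] at h4
  have hΨ : ∀ β, max 0 (ρ - u) ≤ β → β ≤ ρ + u → β < π →
      0 ≤ Real.sin u * Real.cos (Real.arccos Q + β) - Real.sin (ρ+t) * Real.cos β + Real.cos ρ * Real.sin (ρ+t-u) := by
    intro β hb0 hb1 hbπ
    have ecos : Real.cos (Real.arccos Q + β) = Q*Real.cos β - Real.sqrt (1 - Q^2)*Real.sin β := by
      rw [Real.cos_add, hcm, hsmv]
    rw [ecos]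
    rcases le_or_gt (Real.arccos B) β with hββ | hββ
    · have key := sinusoid_nonneg (Real.sin u*Q - Real.sin (ρ+t)) (-(Real.sin u*Real.sqrt (1 - Q^2))) (Real.cos ρ*Real.sin (ρ+t-u))
        (Real.arccos B) β (ρ+u) (Real.arccos_nonneg B) hββ hb1 (by linarith) hbπ
        (by rw [hcβs, hsβs]; exact hg0s)
        (by rw [hcβs, hsβs]; linarith [hg0s']) hg1R
      linarith [key]
    · rcases eq_or_lt_of_le (le_trans (le_max_left 0 (ρ-u)) hb0) with hβ0 | hβ0
      · rw [← hβ0, Real.cos_zero, Real.sin_zero]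
        have hb0' : max 0 (ρ-u) = 0 :=
          le_antisymm (by rw [← hβ0] at hb0; exact hb0) (le_max_left _ _)
        have hmax := hg1L
        rw [hb0', Real.cos_zero, Real.sin_zero] at hmax
        linarith [hmax]
      · have key := sinusoid_nonneg (-(Real.sin u*Q - Real.sin (ρ+t))) (-(Real.sin u*Real.sqrt (1 - Q^2))) (Real.cos ρ*Real.sin (ρ+t-u))
          (π - Real.arccos B) (π - β) (π - max 0 (ρ-u))
          (by linarith [Real.arccos_le_pi B]) (by linarith) (by linarith)
          (by linarith [le_max_left (0:ℝ) (ρ-u)]) (by linarith)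
          (by rw [Real.cos_pi_sub, Real.sin_pi_sub, hcβs, hsβs]; linarith [hg0s])
          (by rw [Real.cos_pi_sub, Real.sin_pi_sub, hcβs, hsβs]; linarith [hg0s'])
          (by rw [Real.cos_pi_sub, Real.sin_pi_sub]; linarith [hg1L])
        rw [Real.cos_pi_sub, Real.sin_pi_sub] at key
        linarith [key]
  have hm1 : Real.arccos Q + u + ρ ≤ π := by
    by_cases h2ρ : 2*ρ+t ≤ π
    · linarith [hmQcw]
    · push_neg at h2ρ
      have hmO2 : Real.arccos Q ≤ 2*π - (3*ρ+t+u) := by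
        have h3 : Real.cos (3*ρ+t+u) = Real.cos (2*π - (3*ρ+t+u)) :=
          (Real.cos_two_pi_sub _).symm
        have h4 := arccos_anti hO2
        rw [h3, Real.arccos_cos (by linarith) (by linarith)] at h4
        exact h4
      linarith
  have hm2 : ρ ≤ u ∨ Real.arccos Q + ρ ≤ t + u := by
    rcases le_or_gt ρ u with h | h
    · exact Or.inl h
    · right
      have hmO3 : Real.arccos Q ≤ t+u-ρ := by
        have h4 := arccos_anti hO3
        rw [Real.arccos_cos (by linarith [htuρ h.le]) (by linarith)] at h4
        exact h4
      linarith
  have lb : ∀ X Z, X^2 + Z^2 ≤ 1 → Real.cos ρ ≤ Z →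
      Real.arccos Q ≤ Real.arccos (Real.sin (ρ+t)*X + Real.cos (ρ+t)*Z) - Real.arccos (Real.sin u*X + Real.cos u*Z) :=
    fun X Z hXZ hZ => core_lb ρ t u (Real.arccos Q) X Z hρ ht hu hlt hsum hΨ hm1 hm2 hXZ hZ
  refine ⟨XS, hXpos, hXlt, lb, ?_⟩
  have hG1 : Real.sin u^2*(1 - A^2) = Real.sin (ρ+t)^2*(1 - B^2) := by
    rw [hAdef, hBdef]
    linear_combination (Real.sin (ρ+t)*Real.cos u-Real.cos (ρ+t)*Real.sin u)*hX
      - (Real.sin ρ^2*Real.sin (ρ+t+u) + Real.cos ρ^2*(Real.sin (ρ+t)*Real.cos u+Real.cos (ρ+t)*Real.sin u))*hw_exp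
      - Real.cos ρ^2*Real.sin (ρ+t-u)*hS_exp + Real.sin (ρ+t+u)*Real.sin (ρ+t-u)*pr + hSw
  have hG2 : Real.sin u*(A*B) + Real.sin (ρ+t)*(1 - B^2) = Real.sin u*Q := by
    linear_combination (-(B))*hBA - hG2'
  have hSA2 : Real.sin u*Real.sqrt (1 - A^2) = Real.sin (ρ+t)*Real.sqrt (1 - B^2) := by
    have e1 : Real.sin u*Real.sqrt (1 - A^2) = Real.sqrt (Real.sin u^2*(1 - A^2)) := by
      rw [Real.sqrt_mul (sq_nonneg _), Real.sqrt_sq hs2.le]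
    have e2 : Real.sin (ρ+t)*Real.sqrt (1 - B^2) = Real.sqrt (Real.sin (ρ+t)^2*(1 - B^2)) := by
      rw [Real.sqrt_mul (sq_nonneg _), Real.sqrt_sq hs1.le]
    rw [e1, e2, hG1]
  have hDcos : Real.cos (Real.arccos A - Real.arccos B) = Q := by
    rw [Real.cos_sub, Real.cos_arccos hA1.le hAu.le, Real.cos_arccos hB1.le hBu.le,
      Real.sin_arccos, Real.sin_arccos]
    have e3 : Real.sin u*(Real.sqrt (1 - A^2)*Real.sqrt (1 - B^2)) = Real.sin (ρ+t)*(1 - B^2) := by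
      rw [show Real.sin u*(Real.sqrt (1 - A^2)*Real.sqrt (1 - B^2)) = (Real.sin u*Real.sqrt (1 - A^2))*Real.sqrt (1 - B^2) from by ring, hSA2,
        show Real.sin (ρ+t)*Real.sqrt (1 - B^2)*Real.sqrt (1 - B^2) = Real.sin (ρ+t)*(Real.sqrt (1 - B^2)^2) from by ring, hSBsq]
    have e4 : Real.sin u*(A*B + Real.sqrt (1 - A^2)*Real.sqrt (1 - B^2)) = Real.sin u*Q := by
      rw [mul_add, e3]
      linear_combination hG2
    exact mul_left_cancel₀ (ne_of_gt hs2) e4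
  have hD0 : 0 ≤ Real.arccos A - Real.arccos B := by
    have h9 := lb XS (Real.cos ρ) (by linarith [hXsq]) le_rfl
    rw [← hAdef, ← hBdef] at h9
    linarith [Real.arccos_nonneg Q]
  have hDπ : Real.arccos A - Real.arccos B ≤ π := by
    linarith [Real.arccos_le_pi A, Real.arccos_nonneg B]
  have final := Real.arccos_cos hD0 hDπ
  rw [hDcos] at final
  rw [← hAdef, ← hBdef]
  exact final.symm


lemma inner33 (a b c x y z : ℝ) :
    (inner ℝ ((WithLp.equiv 2 (Fin 3 → ℝ)).symm ![a, b, c])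
      ((WithLp.equiv 2 (Fin 3 → ℝ)).symm ![x, y, z]) : ℝ) = a*x + b*y + c*z := by
  simp [PiLp.inner_apply, Fin.sum_univ_three, WithLp.equiv_symm_apply,
    RCLike.inner_apply, conj_trivial]
  ring

lemma inner3 (a b c : ℝ) (p : EuclideanSpace ℝ (Fin 3)) :
    (inner ℝ ((WithLp.equiv 2 (Fin 3 → ℝ)).symm ![a, b, c]) p : ℝ)
      = a * p 0 + b * p 1 + c * p 2 := by
  simp [PiLp.inner_apply, Fin.sum_univ_three, WithLp.equiv_symm_apply,
    RCLike.inner_apply, conj_trivial]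
  ring

lemma norm3 (p : EuclideanSpace ℝ (Fin 3)) (h : ‖p‖ = 1) :
    p 0^2 + p 1^2 + p 2^2 = 1 := by
  rw [EuclideanSpace.norm_eq] at h
  have h2 := Real.sqrt_eq_one.mp h
  simpa [Fin.sum_univ_three, sq_abs] using h2

lemma norm3' (a b c : ℝ) (h : a^2+b^2+c^2 = 1) :
    ‖(WithLp.equiv 2 (Fin 3 → ℝ)).symm ![a,b,c]‖ = 1 := by
  rw [EuclideanSpace.norm_eq]
  rw [show ∑ i, ‖((WithLp.equiv 2 (Fin 3 → ℝ)).symm ![a,b,c]) i‖^2 = a^2+b^2+c^2 by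
    simp [Fin.sum_univ_three, WithLp.equiv_symm_apply, sq_abs]]
  rw [h, Real.sqrt_one]

lemma cot_key (ρ t u : ℝ) (h1 : Real.sin ρ ≠ 0) (h2 : Real.sin u ≠ 0)
    (h3 : Real.sin (ρ+t) ≠ 0) :
    Real.sin (ρ+t) * Real.sin (ρ-u) - Real.sin u * Real.sin t
      = Real.sin u * Real.sin ρ * Real.sin (ρ+t)
        * (Real.cot u - (2 * Real.cot ρ - Real.cot (ρ+t))) := by
  rw [Real.cot_eq_cos_div_sin, Real.cot_eq_cos_div_sin, Real.cot_eq_cos_div_sin,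
    Real.sin_sub ρ u, show Real.sin t = Real.sin ((ρ+t) - ρ) from by ring_nf,
    Real.sin_sub (ρ+t) ρ]
  field_simp
  ring

end MinHAux

open MinHAux in
/-- Minimum of `d(x,·) − d(z,·)` over the closed geodesic ball
`B̄(a,ρ)` on the unit sphere `S²`, where `a = (0,0,1)`,
`x = (sin(ρ+t), 0, cos(ρ+t))`, `z = (sin u, 0, cos u)`, `t, u ≥ 0`, `u < ρ + t` and
`ρ + t + u < π`. (The condition `u = 0` corresponds to `cot u = +∞`.) -/
theorem min_h_sphere (ρ t u : ℝ) (hρ : 0 < ρ) (ht : 0 ≤ t) (hu : 0 ≤ u)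
    (hlt : u < ρ + t) (hsum : ρ + t + u < Real.pi) :
    IsLeast
      ((fun p : EuclideanSpace ℝ (Fin 3) =>
          sphereDist ((WithLp.equiv 2 (Fin 3 → ℝ)).symm
              ![Real.sin (ρ + t), 0, Real.cos (ρ + t)]) p -
            sphereDist ((WithLp.equiv 2 (Fin 3 → ℝ)).symm ![Real.sin u, 0, Real.cos u]) p) ''
        {p : EuclideanSpace ℝ (Fin 3) | ‖p‖ = 1 ∧
          sphereDist ((WithLp.equiv 2 (Fin 3 → ℝ)).symm ![0, 0, 1]) p ≤ ρ})
      (if u = 0 ∨ Real.cot u ≥ 2 * Real.cot ρ - Real.cot (ρ + t) then t - ρ + u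
       else Real.arccos (Real.cos (ρ + t - u) +
          Real.sin ρ ^ 2 * Real.sin (ρ + t - u) ^ 2 /
            (2 * Real.sin u * Real.sin (ρ + t)))) := by
  have hpi := Real.pi_pos
  by_cases hcase : u = 0 ∨ Real.cot u ≥ 2 * Real.cot ρ - Real.cot (ρ + t)
  · rw [if_pos hcase]
    have huρ : u ≤ ρ := by
      rcases hcase with h0 | hcond
      · linarith [h0.le]
      · rcases eq_or_lt_of_le hu with h0 | hupos
        · linarith [h0.le]
        · exact u_le_rho ρ t u hρ ht hupos hlt hsum (E1_of_cot ρ t u hρ ht hupos hlt hsum hcond)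
    constructor
    · refine ⟨(WithLp.equiv 2 (Fin 3 → ℝ)).symm ![Real.sin ρ, 0, Real.cos ρ], ⟨?_, ?_⟩, ?_⟩
      · exact norm3' _ _ _ (by linear_combination Real.sin_sq_add_cos_sq ρ)
      · show sphereDist _ _ ≤ ρ
        unfold sphereDist
        rw [inner33, show (0:ℝ)*Real.sin ρ + 0*0 + 1*Real.cos ρ = Real.cos ρ from by ring,
          Real.arccos_cos hρ.le (by linarith)]
      · show sphereDist _ _ - sphereDist _ _ = t - ρ + u
        unfold sphereDist
        rw [inner33, inner33,
          show Real.sin (ρ+t)*Real.sin ρ + 0*0 + Real.cos (ρ+t)*Real.cos ρ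
            = Real.cos ((ρ+t)-ρ) from by rw [Real.cos_sub]; ring,
          show Real.sin u*Real.sin ρ + 0*0 + Real.cos u*Real.cos ρ
            = Real.cos (ρ-u) from by rw [Real.cos_sub]; ring,
          show (ρ+t)-ρ = t from by ring,
          Real.arccos_cos ht (by linarith),
          Real.arccos_cos (by linarith) (by linarith)]
        ring
    · rintro v ⟨p, ⟨hn, hb⟩, rfl⟩
      dsimp only
      have hcoord := norm3 p hn
      unfold sphereDist at hb ⊢
      rw [inner3] at hb
      rw [inner3, inner3]
      rw [show (0:ℝ)*p 0 + 0*p 1 + 1*p 2 = p 2 from by ring] at hb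
      have hZ2 : (p 2)^2 ≤ 1 := by nlinarith [sq_nonneg (p 0), sq_nonneg (p 1)]
      have hZb := abs_facts hZ2
      have hZ : Real.cos ρ ≤ p 2 := by
        have h1 := Real.cos_le_cos_of_nonneg_of_le_pi (Real.arccos_nonneg _) (by linarith) hb
        rwa [Real.cos_arccos hZb.1 hZb.2] at h1
      have hXZ : (p 0)^2 + (p 2)^2 ≤ 1 := by nlinarith [sq_nonneg (p 1)]
      rcases eq_or_lt_of_le hu with h0 | hupos
      · rw [show Real.sin u * p 0 + 0 * p 1 + Real.cos u * p 2 = p 2 from by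
          rw [← h0, Real.sin_zero, Real.cos_zero]; ring]
        have hlb := case0_lb ρ t hρ ht (by linarith) (by linarith) (p 0) (p 2) hXZ hZ
        rw [show Real.sin (ρ+t) * p 0 + 0*p 1 + Real.cos (ρ+t) * p 2
          = Real.sin (ρ+t) * p 0 + Real.cos (ρ+t) * p 2 from by ring]
        linarith [hlb]
      · have hcond : Real.cot u ≥ 2*Real.cot ρ - Real.cot (ρ+t) := by
          rcases hcase with h0 | hc
          · exfalso; rw [h0] at hupos; exact lt_irrefl 0 hupos
          · exact hc
        have hE1 := E1_of_cot ρ t u hρ ht hupos hlt hsum hcond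
        have hlb := case1_lb ρ t u hρ ht hupos hlt hsum hE1 (p 0) (p 2) hXZ hZ
        rw [show Real.sin (ρ+t) * p 0 + 0*p 1 + Real.cos (ρ+t) * p 2
            = Real.sin (ρ+t)*p 0 + Real.cos (ρ+t)*p 2 from by ring,
          show Real.sin u * p 0 + 0*p 1 + Real.cos u * p 2
            = Real.sin u*p 0 + Real.cos u*p 2 from by ring]
        exact hlb
  · rw [if_neg hcase]
    push_neg at hcase
    obtain ⟨hu0, hcond⟩ := hcase
    have hupos : 0 < u := lt_of_le_of_ne hu (Ne.symm hu0)
    have hsρ : 0 < Real.sin ρ := Real.sin_pos_of_pos_of_lt_pi hρ (by linarith)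
    have hsα : 0 < Real.sin (ρ+t) := Real.sin_pos_of_pos_of_lt_pi (by linarith) (by linarith)
    have hsu : 0 < Real.sin u := Real.sin_pos_of_pos_of_lt_pi hupos (by linarith)
    have hE2 : Real.sin ρ * Real.sin (ρ+t+u)
        < 2 * Real.cos ρ * Real.sin u * Real.sin (ρ+t) := by
      have key := cot_key ρ t u (ne_of_gt hsρ) (ne_of_gt hsu) (ne_of_gt hsα)
      have hneg : Real.sin (ρ+t)*Real.sin (ρ-u) - Real.sin u*Real.sin t < 0 := by
        rw [key]
        apply mul_neg_of_pos_of_neg (by positivity)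
        linarith [hcond]
      have hid := id_E2 ρ t u
      linarith
    obtain ⟨XS, hXpos, hXlt, lb, memv⟩ := case2_main ρ t u hρ ht hupos hlt hsum hE2
    have hY2 : (0:ℝ) ≤ Real.sin ρ^2 - XS^2 := by nlinarith
    constructor
    · refine ⟨(WithLp.equiv 2 (Fin 3 → ℝ)).symm
        ![XS, Real.sqrt (Real.sin ρ^2 - XS^2), Real.cos ρ], ⟨?_, ?_⟩, ?_⟩
      · apply norm3'
        rw [Real.sq_sqrt hY2]
        linear_combination Real.sin_sq_add_cos_sq ρ
      · show sphereDist _ _ ≤ ρ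
        unfold sphereDist
        rw [inner33, show (0:ℝ)*XS + 0*Real.sqrt (Real.sin ρ^2 - XS^2) + 1*Real.cos ρ
          = Real.cos ρ from by ring, Real.arccos_cos hρ.le (by linarith)]
      · show sphereDist _ _ - sphereDist _ _ = _
        unfold sphereDist
        rw [inner33, inner33,
          show Real.sin (ρ+t)*XS + 0*Real.sqrt (Real.sin ρ^2 - XS^2)
              + Real.cos (ρ+t)*Real.cos ρ
            = Real.sin (ρ+t)*XS + Real.cos (ρ+t)*Real.cos ρ from by ring,
          show Real.sin u*XS + 0*Real.sqrt (Real.sin ρ^2 - XS^2) + Real.cos u*Real.cos ρ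
            = Real.sin u*XS + Real.cos u*Real.cos ρ from by ring]
        exact memv
    · rintro v ⟨p, ⟨hn, hb⟩, rfl⟩
      dsimp only
      have hcoord := norm3 p hn
      unfold sphereDist at hb ⊢
      rw [inner3] at hb
      rw [inner3, inner3]
      rw [show (0:ℝ)*p 0 + 0*p 1 + 1*p 2 = p 2 from by ring] at hb
      have hZ2 : (p 2)^2 ≤ 1 := by nlinarith [sq_nonneg (p 0), sq_nonneg (p 1)]
      have hZb := abs_facts hZ2
      have hZ : Real.cos ρ ≤ p 2 := by
        have h1 := Real.cos_le_cos_of_nonneg_of_le_pi (Real.arccos_nonneg _) (by linarith) hb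
        rwa [Real.cos_arccos hZb.1 hZb.2] at h1
      have hXZ : (p 0)^2 + (p 2)^2 ≤ 1 := by nlinarith [sq_nonneg (p 1)]
      have hlb := lb (p 0) (p 2) hXZ hZ
      rw [show Real.sin (ρ+t) * p 0 + 0*p 1 + Real.cos (ρ+t) * p 2
          = Real.sin (ρ+t)*p 0 + Real.cos (ρ+t)*p 2 from by ring,
        show Real.sin u * p 0 + 0*p 1 + Real.cos u * p 2
          = Real.sin u*p 0 + Real.cos u*p 2 from by ring]
      exact hlb
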